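/- Let H ⊆ L ⊆ T be commutative cancellative monoids such that the inclusion H ↪ T is a transfer homomorphism. If T^× ∩ L = L^× and L = H·L^×, then the inclusion L ↪ T is a transfer homomorphism. -/
import Mathlib


/-- `x` is a unit of the submonoid `H`. -/
def IsUnitIn {T : Type*} [CancelCommMonoid T] (H : Submonoid T) (x : T) : Prop :=
  x ∈ H ∧ ∃ y ∈ H, x * y = 1

/-- The inclusion `H ↪ T` is a transfer homomorphism. -/
def TransferIncl {T : Type*} [CancelCommMonoid T] (H : Submonoid T) : Prop :=
  ((∀ t : T, ∃ h ∈ H, ∃ ε : Tˣ, t = h * ε) ∧ (∀ h ∈ H, IsUnit h → IsUnitIn H h)) ∧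
    ∀ u ∈ H, ∀ b c : T, u = b * c →
      ∃ v ∈ H, ∃ w ∈ H, ∃ ε η : Tˣ, u = v * w ∧ v = b * ε ∧ w = c * η

theorem stmt5 {T : Type*} [CancelCommMonoid T] (H L : Submonoid T) (hHL : H ≤ L)
    (htransfer : TransferIncl H)
    (hunits : ∀ x ∈ L, IsUnit x → IsUnitIn L x)
    (hL : ∀ x ∈ L, ∃ h ∈ H, ∃ ε : T, IsUnitIn L ε ∧ x = h * ε) :
    TransferIncl L := by
  obtain ⟨⟨hT1a, _⟩, hT2⟩ := htransfer
  refine ⟨⟨fun t => ?_, hunits⟩, fun u hu b c huv => ?_⟩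
  · obtain ⟨h, hh, ε, hε⟩ := hT1a t
    exact ⟨h, hHL hh, ε, hε⟩
  · obtain ⟨h, hh, ε, ⟨hεL, y, hyL, hεy⟩, hueq⟩ := hL u hu
    have hkey : h = b * (c * y) := by
      have : u * y = h * (ε * y) := by rw [hueq]; simp [mul_assoc, mul_comm, mul_left_comm]
      rw [hεy, mul_one] at this
      rw [← this, huv]; simp [mul_assoc, mul_comm, mul_left_comm]
    obtain ⟨v, hv, w, hw, ε', η', huw, hvb, hwc⟩ := hT2 h hh b (c * y) hkey
    refine ⟨v, hHL hv, w * ε, mul_mem (hHL hw) hεL, ε', η', ?_, hvb, ?_⟩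
    · rw [hueq, huw]; simp [mul_assoc, mul_comm, mul_left_comm]
    · rw [hwc]
      have : y * ε = 1 := by rw [mul_comm]; exact hεy
      calc c * y * ↑η' * ε = c * ↑η' * (y * ε) := by simp [mul_assoc, mul_comm, mul_left_comm]
        _ = c * ↑η' := by rw [this, mul_one]
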